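/- Under the IIA identity and the bound Σ_ℓ p(ℓ|c,w) ≤ 1/B with B ≥ 1 + γ, the greedy Q-function with zero-initialized value iteration is monotone in the action set: for every state c, set w, item ℓ' ∉ w and t ≥ 0, Q^t_greedy(w ∪ {ℓ'}, c) ≥ Q^t_greedy(w, c). -/

import Mathlib

open Finset

/-- Bayesian posterior belief after item `ℓ` is chosen from displayed set `w`. -/
noncomputable def post {M L : Type*} [Fintype M] (p : L → M → Finset L → ℝ)
    (c : M → ℝ) (ℓ : L) (w : Finset L) : M → ℝ :=
  fun m' => p ℓ m' w * c m' / (∑ m, p ℓ m w * c m)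

/-- The Q-function associated to a value function `V`. -/
noncomputable def Qfun {M L : Type*} [Fintype M] [Fintype L] (p : L → M → Finset L → ℝ)
    (γ : ℝ) (V : (M → ℝ) → ℝ) (w : Finset L) (c : M → ℝ) : ℝ :=
  ∑ m, ∑ ℓ, c m * p ℓ m w * (1 + γ * V (post p c ℓ w))

/-- Greedy value iteration: `V⁰ = 0` and `Vᵗ(c) = max_{w ∈ G} Q_{Vᵗ⁻¹}(w, c)`. -/
noncomputable def Vg {M L : Type*} [Fintype M] [Fintype L] (p : L → M → Finset L → ℝ)
    (γ : ℝ) (G : Finset (Finset L)) (hG : G.Nonempty) : ℕ → (M → ℝ) → ℝ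
  | 0 => fun _ => 0
  | t + 1 => fun c => G.sup' hG (fun w => Qfun p γ (Vg p γ G hG t) w c)

private lemma sup'_mono_comp {α : Type*} (A : Finset α) (hA : A.Nonempty) (f : α → ℝ)
    (φ : ℝ → ℝ) (hφ : Monotone φ) : φ (A.sup' hA f) = A.sup' hA (fun a => φ (f a)) := by
  obtain ⟨a, ha, hae⟩ := Finset.exists_mem_eq_sup' hA f
  apply le_antisymm
  · rw [hae]
    exact Finset.le_sup' (fun a => φ (f a)) ha
  · exact Finset.sup'_le _ _ fun b hb => hφ (Finset.le_sup' f hb)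

private lemma sup'_add_le' {α : Type*} (A : Finset α) (hA : A.Nonempty) (f g : α → ℝ) :
    A.sup' hA (fun a => f a + g a) ≤ A.sup' hA f + A.sup' hA g :=
  Finset.sup'_le _ _ fun a ha => add_le_add (Finset.le_sup' f ha) (Finset.le_sup' g ha)

private lemma sum_sup'_pi {L α : Type*} [Fintype L] [DecidableEq L] (A : Finset α)
    (hA : A.Nonempty) (f : L → α → ℝ) :
    ∑ ℓ, A.sup' hA (f ℓ) = (Fintype.piFinset fun _ : L => A).sup'
      (Fintype.piFinset_nonempty.2 fun _ => hA) (fun g => ∑ ℓ, f ℓ (g ℓ)) := by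
  apply le_antisymm
  · choose a haA hae using fun ℓ => Finset.exists_mem_eq_sup' hA (f ℓ)
    calc ∑ ℓ, A.sup' hA (f ℓ) = ∑ ℓ, f ℓ (a ℓ) := Finset.sum_congr rfl fun ℓ _ => hae ℓ
      _ ≤ _ := Finset.le_sup' (fun g => ∑ ℓ, f ℓ (g ℓ)) (Fintype.mem_piFinset.2 haA)
  · refine Finset.sup'_le _ _ fun g hg => Finset.sum_le_sum fun ℓ _ =>
      Finset.le_sup' (f ℓ) (Fintype.mem_piFinset.1 hg ℓ)

private lemma Qfun_rep {M L : Type*} [Fintype M] [Fintype L]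
    (p : L → M → Finset L → ℝ) (γ : ℝ)
    (hp0 : ∀ ℓ m w, 0 ≤ p ℓ m w)
    (V : (M → ℝ) → ℝ) (A : Finset (M → ℝ)) (hA : A.Nonempty)
    (hV : ∀ x : M → ℝ, (∀ m, 0 ≤ x m) → V x = A.sup' hA fun α => ∑ m, α m * x m)
    (w : Finset L) (x : M → ℝ) (hx : ∀ m, 0 ≤ x m) :
    Qfun p γ V w x = ∑ ℓ, ((∑ m, x m * p ℓ m w) +
      γ * A.sup' hA fun α => ∑ m, α m * (x m * p ℓ m w)) := by
  rw [Qfun, Finset.sum_comm]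
  refine Finset.sum_congr rfl fun ℓ _ => ?_
  have key : (∑ m, p ℓ m w * x m) * V (post p x ℓ w)
      = A.sup' hA fun α => ∑ m, α m * (x m * p ℓ m w) := by
    have hZ0 : 0 ≤ ∑ m, p ℓ m w * x m :=
      Finset.sum_nonneg fun m _ => mul_nonneg (hp0 _ _ _) (hx m)
    rcases eq_or_lt_of_le hZ0 with hZ | hZ
    · have hzero : ∀ m : M, p ℓ m w * x m = 0 := by
        intro m
        exact (Finset.sum_eq_zero_iff_of_nonneg
          (fun m _ => mul_nonneg (hp0 _ _ _) (hx m))).1 hZ.symm m (Finset.mem_univ m)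
      have hzero' : ∀ m : M, x m * p ℓ m w = 0 := fun m => by rw [mul_comm]; exact hzero m
      have hpost : post p x ℓ w = fun _ => (0 : ℝ) := by
        funext m'
        simp [post, hzero m']
      rw [hpost, hV _ (fun m => le_refl 0)]
      simp [hzero', ← hZ, Finset.sup'_const]
    · have hZne : (∑ m, p ℓ m w * x m) ≠ 0 := ne_of_gt hZ
      have hpost : ∀ m', 0 ≤ post p x ℓ w m' := fun m' =>
        div_nonneg (mul_nonneg (hp0 _ _ _) (hx m')) hZ0
      rw [hV _ hpost,
        sup'_mono_comp A hA _ (fun r => (∑ m, p ℓ m w * x m) * r)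
          (fun r s hrs => mul_le_mul_of_nonneg_left hrs hZ0)]
      refine Finset.sup'_congr hA rfl fun α _ => ?_
      rw [Finset.mul_sum]
      refine Finset.sum_congr rfl fun m _ => ?_
      simp only [post]
      rw [mul_comm, mul_assoc, div_mul_cancel₀ _ hZne, mul_comm (p ℓ m w) (x m)]
  calc ∑ m, x m * p ℓ m w * (1 + γ * V (post p x ℓ w))
      = (∑ m, x m * p ℓ m w) * (1 + γ * V (post p x ℓ w)) := (Finset.sum_mul _ _ _).symm
    _ = (∑ m, x m * p ℓ m w) + γ * ((∑ m, p ℓ m w * x m) * V (post p x ℓ w)) := by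
        have h : (∑ m, x m * p ℓ m w) = ∑ m, p ℓ m w * x m :=
          Finset.sum_congr rfl fun m _ => mul_comm _ _
        rw [h]; ring
    _ = _ := by rw [key]

private lemma alpha_exists {M L : Type*} [Fintype M] [Fintype L] [DecidableEq L]
    (p : L → M → Finset L → ℝ) (γ B : ℝ) (hγ : 0 ≤ γ) (hB : 1 + γ ≤ B)
    (G : Finset (Finset L)) (hG : G.Nonempty)
    (hp0 : ∀ ℓ m w, 0 ≤ p ℓ m w)
    (hpb : ∀ (m : M) (w : Finset L), ∑ ℓ, p ℓ m w ≤ 1 / B) (t : ℕ) :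
    ∃ (A : Finset (M → ℝ)) (hA : A.Nonempty),
      (∀ α ∈ A, ∀ m, 0 ≤ α m ∧ α m ≤ 1 / (B - γ)) ∧
      ∀ x : M → ℝ, (∀ m, 0 ≤ x m) →
        Vg p γ G hG t x = A.sup' hA fun α => ∑ m, α m * x m := by
  classical
  have hBγ : (1:ℝ) ≤ B - γ := by linarith
  have hBγ0 : (0:ℝ) < B - γ := by linarith
  have hB0 : (0:ℝ) < B := by linarith
  induction t with
  | zero =>
    refine ⟨{fun _ => 0}, Finset.singleton_nonempty _, ?_, ?_⟩
    · intro α hα m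
      rw [Finset.mem_singleton] at hα
      subst hα
      exact ⟨le_refl 0, by positivity⟩
    · intro x hx
      simp [Vg, Finset.sup'_const]
  | succ t ih =>
    obtain ⟨A, hA, hbd, hval⟩ := ih
    have hpiNe : (Fintype.piFinset fun _ : L => A).Nonempty :=
      Fintype.piFinset_nonempty.2 fun _ => hA
    have hprodNe : (G ×ˢ (Fintype.piFinset fun _ : L => A)).Nonempty := hG.product hpiNe
    refine ⟨(G ×ˢ (Fintype.piFinset fun _ : L => A)).image
      (fun q => fun m => ∑ ℓ, p ℓ m q.1 * (1 + γ * q.2 ℓ m)), hprodNe.image _, ?_, ?_⟩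
    · intro α hα m
      rw [Finset.mem_image] at hα
      obtain ⟨⟨w, σ⟩, hq, rfl⟩ := hα
      rw [Finset.mem_product] at hq
      have hσ : ∀ ℓ, σ ℓ ∈ A := Fintype.mem_piFinset.1 hq.2
      constructor
      · refine Finset.sum_nonneg fun ℓ _ => mul_nonneg (hp0 _ _ _) ?_
        have h1 := (hbd _ (hσ ℓ) m).1
        nlinarith
      · calc ∑ ℓ, p ℓ m w * (1 + γ * σ ℓ m)
            ≤ ∑ ℓ, p ℓ m w * (B / (B - γ)) := by
              refine Finset.sum_le_sum fun ℓ _ => mul_le_mul_of_nonneg_left ?_ (hp0 _ _ _)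
              have h1 := (hbd _ (hσ ℓ) m).2
              calc 1 + γ * σ ℓ m ≤ 1 + γ * (1 / (B - γ)) := by nlinarith
                _ = B / (B - γ) := by field_simp; ring
          _ = (∑ ℓ, p ℓ m w) * (B / (B - γ)) := (Finset.sum_mul _ _ _).symm
          _ ≤ (1 / B) * (B / (B - γ)) :=
              mul_le_mul_of_nonneg_right (hpb m w) (by positivity)
          _ = 1 / (B - γ) := by field_simp
    · intro x hx
      simp only [Vg]
      rw [Finset.sup'_image, Finset.sup'_product_left]
      refine Finset.sup'_congr hG rfl fun w hw => ?_
      rw [Qfun_rep p γ hp0 _ A hA hval w x hx]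
      have step1 : ∀ ℓ : L,
          (∑ m, x m * p ℓ m w) + γ * A.sup' hA (fun α => ∑ m, α m * (x m * p ℓ m w))
          = A.sup' hA (fun α => (∑ m, x m * p ℓ m w) + γ * ∑ m, α m * (x m * p ℓ m w)) :=
        fun ℓ => sup'_mono_comp A hA _ (fun r => (∑ m, x m * p ℓ m w) + γ * r)
          (fun r s hrs => add_le_add (le_refl _) (mul_le_mul_of_nonneg_left hrs hγ))
      simp_rw [step1]
      rw [sum_sup'_pi A hA]
      refine Finset.sup'_congr hpiNe rfl fun σ hσ => ?_
      simp only [Function.comp]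
      simp_rw [Finset.sum_mul]
      rw [Finset.sum_comm]
      refine Finset.sum_congr rfl fun ℓ _ => ?_
      rw [Finset.mul_sum, ← Finset.sum_add_distrib]
      refine Finset.sum_congr rfl fun m _ => ?_
      ring

/-- Monotonicity of the greedy Q-function in the action set: under the IIA identity and
the bound `Σ_ℓ p(ℓ|c,w) ≤ 1/B` with `B ≥ 1 + γ`, adding an item to the displayed set
does not decrease the Q-value. -/
theorem greedy_Q_monotone {M L : Type*} [Fintype M] [Fintype L] [DecidableEq L]
    (p : L → M → Finset L → ℝ) (γ B : ℝ) (hγ : 0 ≤ γ) (hB : 1 + γ ≤ B)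
    (G : Finset (Finset L)) (hG : G.Nonempty)
    (hp : ∀ (ℓ : L) (m : M) (w : Finset L), 0 ≤ p ℓ m w ∧ p ℓ m w ≤ 1)
    (hsupp : ∀ (ℓ : L) (m : M) (w : Finset L), ℓ ∉ w → p ℓ m w = 0)
    (hIIA : ∀ (m : M) (w : Finset L) (ℓ' : L), ℓ' ∉ w → ∀ ℓ ∈ w,
      p ℓ m w = p ℓ m (insert ℓ' w) + p ℓ' m (insert ℓ' w) * p ℓ m w)
    (hsum : ∀ (c : M → ℝ), (∀ m, 0 ≤ c m) → (∑ m, c m) = 1 →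
      ∀ w : Finset L, ∑ ℓ, ∑ m, c m * p ℓ m w ≤ 1 / B)
    (t : ℕ) (c : M → ℝ) (hc0 : ∀ m, 0 ≤ c m) (hc1 : ∑ m, c m = 1)
    (w : Finset L) (ℓ' : L) (hℓ' : ℓ' ∉ w) :
    Qfun p γ (Vg p γ G hG t) w c ≤ Qfun p γ (Vg p γ G hG t) (insert ℓ' w) c := by
  classical
  have hBγ : (1:ℝ) ≤ B - γ := by linarith
  have hBγ0 : (0:ℝ) < B - γ := by linarith
  have hB0 : (0:ℝ) < B := by linarith
  have hp0 : ∀ ℓ m w, 0 ≤ p ℓ m w := fun ℓ m w => (hp ℓ m w).1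
  -- pointwise (per-state) bound on the choice probabilities
  have hpb : ∀ (m : M) (u : Finset L), ∑ ℓ, p ℓ m u ≤ 1 / B := by
    intro m u
    have h := hsum (fun m'' => if m'' = m then 1 else 0)
      (fun m'' => by by_cases h : m'' = m <;> simp [h]) (by simp) u
    simpa [ite_mul, one_mul, zero_mul, Finset.sum_ite_eq'] using h
  obtain ⟨A, hA, hbd, hval⟩ := alpha_exists p γ B hγ hB G hG hp0 hpb t
  set w' : Finset L := insert ℓ' w with hw'
  rw [Qfun_rep p γ hp0 _ A hA hval w c hc0, Qfun_rep p γ hp0 _ A hA hval w' c hc0]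
  set F : Finset L → L → ℝ := fun u ℓ => (∑ m, c m * p ℓ m u) +
    γ * A.sup' hA fun α => ∑ m, α m * (c m * p ℓ m u) with hF
  set Z' : ℝ := ∑ m, c m * p ℓ' m w' with hZ'
  set D : L → ℝ := fun ℓ => ∑ m, c m * (p ℓ' m w' * p ℓ m w) with hD
  show (∑ ℓ, F w ℓ) ≤ ∑ ℓ, F w' ℓ
  have hD0 : ∀ ℓ, 0 ≤ D ℓ := fun ℓ => Finset.sum_nonneg fun m _ =>
    mul_nonneg (hc0 m) (mul_nonneg (hp0 _ _ _) (hp0 _ _ _))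
  -- F u ℓ = 0 when p ℓ · u ≡ 0
  have hFzero : ∀ (u : Finset L) (ℓ : L), (∀ m, p ℓ m u = 0) → F u ℓ = 0 := by
    intro u ℓ h
    simp [hF, h, Finset.sup'_const]
  -- the key per-item inequality
  have hkey : ∀ ℓ : L, F w ℓ + (if ℓ = ℓ' then Z' else 0) ≤ F w' ℓ + (B / (B - γ)) * D ℓ := by
    intro ℓ
    by_cases hℓeq : ℓ = ℓ'
    · subst hℓeq
      have hFw : F w ℓ = 0 := hFzero w ℓ (fun m => hsupp _ _ _ hℓ')
      have hD' : D ℓ = 0 := by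
        simp [hD, hsupp ℓ _ w hℓ']
      have hFw' : Z' ≤ F w' ℓ := by
        obtain ⟨α, hαA⟩ := id hA
        have h1 : (0:ℝ) ≤ ∑ m, α m * (c m * p ℓ m w') :=
          Finset.sum_nonneg fun m _ => mul_nonneg (hbd _ hαA m).1
            (mul_nonneg (hc0 m) (hp0 _ _ _))
        have h2 : (0:ℝ) ≤ A.sup' hA fun α => ∑ m, α m * (c m * p ℓ m w') :=
          le_trans h1 (Finset.le_sup' (fun α => ∑ m, α m * (c m * p ℓ m w')) hαA)
        have h3 : Z' = ∑ m, c m * p ℓ m w' := rfl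
        have h9 : (0:ℝ) ≤ γ * A.sup' hA fun α => ∑ m, α m * (c m * p ℓ m w') :=
          mul_nonneg hγ h2
        simp only [hF]
        linarith
      simp only [if_pos rfl, hFw, hD', zero_add, mul_zero, add_zero]
      exact hFw'
    · rw [if_neg hℓeq, add_zero]
      by_cases hℓw : ℓ ∈ w
      · -- IIA decomposition
        have hiia : ∀ m, c m * p ℓ m w = c m * p ℓ m w' + c m * (p ℓ' m w' * p ℓ m w) := by
          intro m
          calc c m * p ℓ m w
              = c m * (p ℓ m w' + p ℓ' m w' * p ℓ m w) := by
                rw [← hIIA m w ℓ' hℓ' ℓ hℓw]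
            _ = c m * p ℓ m w' + c m * (p ℓ' m w' * p ℓ m w) := by ring
        have hZsplit : (∑ m, c m * p ℓ m w) = (∑ m, c m * p ℓ m w') + D ℓ := by
          rw [hD, ← Finset.sum_add_distrib]
          exact Finset.sum_congr rfl fun m _ => hiia m
        have hgbound : A.sup' hA (fun α => ∑ m, α m * (c m * (p ℓ' m w' * p ℓ m w)))
            ≤ (1 / (B - γ)) * D ℓ := by
          refine Finset.sup'_le _ _ fun α hα => ?_
          calc ∑ m, α m * (c m * (p ℓ' m w' * p ℓ m w))
              ≤ ∑ m, (1 / (B - γ)) * (c m * (p ℓ' m w' * p ℓ m w)) := by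
                refine Finset.sum_le_sum fun m _ => ?_
                exact mul_le_mul_of_nonneg_right (hbd _ hα m).2
                  (mul_nonneg (hc0 m) (mul_nonneg (hp0 _ _ _) (hp0 _ _ _)))
            _ = (1 / (B - γ)) * D ℓ := by rw [hD, Finset.mul_sum]
        have hsup_split : A.sup' hA (fun α => ∑ m, α m * (c m * p ℓ m w))
            ≤ A.sup' hA (fun α => ∑ m, α m * (c m * p ℓ m w')) + (1 / (B - γ)) * D ℓ := by
          calc A.sup' hA (fun α => ∑ m, α m * (c m * p ℓ m w))
              = A.sup' hA (fun α => (∑ m, α m * (c m * p ℓ m w'))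
                  + ∑ m, α m * (c m * (p ℓ' m w' * p ℓ m w))) := by
                refine Finset.sup'_congr hA rfl fun α _ => ?_
                rw [← Finset.sum_add_distrib]
                refine Finset.sum_congr rfl fun m _ => ?_
                rw [← mul_add, ← hiia m]
            _ ≤ A.sup' hA (fun α => ∑ m, α m * (c m * p ℓ m w'))
                  + A.sup' hA (fun α => ∑ m, α m * (c m * (p ℓ' m w' * p ℓ m w))) :=
                sup'_add_le' A hA _ _
            _ ≤ _ := add_le_add (le_refl _) hgbound
        have h7 := mul_le_mul_of_nonneg_left hsup_split hγ
        rw [mul_add] at h7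
        have h8 : (B / (B - γ)) * D ℓ = D ℓ + γ * ((1 / (B - γ)) * D ℓ) := by
          field_simp
          ring
        simp only [hF]
        linarith
      · have hFw : F w ℓ = 0 := hFzero w ℓ (fun m => hsupp _ _ _ hℓw)
        have hℓw' : ℓ ∉ w' := by
          simp [hw', Finset.mem_insert, hℓeq, hℓw]
        have hFw' : F w' ℓ = 0 := hFzero w' ℓ (fun m => hsupp _ _ _ hℓw')
        rw [hFw, hFw']
        exact le_add_of_nonneg_right (mul_nonneg (by positivity) (hD0 ℓ))
  -- sum up
  have hsumkey := Finset.sum_le_sum (fun ℓ (_ : ℓ ∈ Finset.univ) => hkey ℓ)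
  have hite : (∑ ℓ : L, if ℓ = ℓ' then Z' else (0:ℝ)) = Z' := by simp
  have e1 : (∑ ℓ : L, (F w ℓ + if ℓ = ℓ' then Z' else (0:ℝ)))
      = (∑ ℓ, F w ℓ) + Z' := by
    have h := Finset.sum_add_distrib (s := (Finset.univ : Finset L))
      (f := fun ℓ => F w ℓ) (g := fun ℓ => if ℓ = ℓ' then Z' else (0:ℝ))
    rw [h, hite]
  have e2 : (∑ ℓ : L, (F w' ℓ + B / (B - γ) * D ℓ))
      = (∑ ℓ, F w' ℓ) + B / (B - γ) * (∑ ℓ, D ℓ) := by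
    have h := Finset.sum_add_distrib (s := (Finset.univ : Finset L))
      (f := fun ℓ => F w' ℓ) (g := fun ℓ => B / (B - γ) * D ℓ)
    rw [h, Finset.mul_sum]
  rw [e1, e2] at hsumkey
  -- the total loss is dominated by the gain Z'
  have hloss : (B / (B - γ)) * ∑ ℓ, D ℓ ≤ Z' := by
    have hswap : ∑ ℓ, D ℓ = ∑ m, c m * p ℓ' m w' * ∑ ℓ, p ℓ m w := by
      simp only [hD]
      rw [Finset.sum_comm]
      refine Finset.sum_congr rfl fun m _ => ?_
      rw [Finset.mul_sum]
      refine Finset.sum_congr rfl fun ℓ _ => ?_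
      ring
    rw [hswap, Finset.mul_sum, hZ']
    refine Finset.sum_le_sum fun m _ => ?_
    have h1 : ∑ ℓ, p ℓ m w ≤ 1 / B := hpb m w
    have h3 : 0 ≤ c m * p ℓ' m w' := mul_nonneg (hc0 m) (hp0 _ _ _)
    have h4 : B / (B - γ) * (∑ ℓ, p ℓ m w) ≤ B / (B - γ) * (1 / B) :=
      mul_le_mul_of_nonneg_left h1 (by positivity)
    have h5 : B / (B - γ) * (1 / B) = 1 / (B - γ) := by
      field_simp
    have h6 : (1:ℝ) / (B - γ) ≤ 1 := by
      rw [div_le_one hBγ0]; linarith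
    calc B / (B - γ) * (c m * p ℓ' m w' * ∑ ℓ, p ℓ m w)
        = (c m * p ℓ' m w') * (B / (B - γ) * ∑ ℓ, p ℓ m w) := by ring
      _ ≤ (c m * p ℓ' m w') * (1 / (B - γ)) :=
          mul_le_mul_of_nonneg_left (le_trans h4 (le_of_eq h5)) h3
      _ ≤ (c m * p ℓ' m w') * 1 := mul_le_mul_of_nonneg_left h6 h3
      _ = c m * p ℓ' m w' := mul_one _
  linarith
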